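/- Let λ > 0 and let ψ : ℝ³ → ℂ be a C¹ function supported in the unit ball. Define K(u,v,x,y) = ∫_ℝ e^{iλ[(u-x)t² + (v²-y²)t]} conj(ψ(x,y,t)) ψ(u,v,t) dt. Then there is a constant C, depending only on ψ, such that |K(u,v,x,y)| ≤ C λ^{-1/2} (|u-x| + |v²-y²|)^{-1/2} for all (u,v,x,y) with (u-x, v²-y²) ≠ (0,0). -/

import Mathlib

open MeasureTheory Real

open intervalIntegral

noncomputable def fr (μ : ℝ) (s : ℝ) : ℂ := Complex.exp (((μ * s ^ 2 : ℝ) : ℂ) * Complex.I)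

lemma fr_cont (μ : ℝ) : Continuous (fr μ) := by
  unfold fr; fun_prop

lemma fr_norm (μ s : ℝ) : ‖fr μ s‖ = 1 := Complex.norm_exp_ofReal_mul_I _

lemma fr_intable (μ a b : ℝ) : IntervalIntegrable (fr μ) volume a b :=
  (fr_cont μ).intervalIntegrable a b

lemma fr_hasDerivAt (μ s : ℝ) :
    HasDerivAt (fr μ) (fr μ s * (((2 * μ * s : ℝ) : ℂ) * Complex.I)) s := by
  have h1 : HasDerivAt (fun x : ℝ => μ * x ^ 2) (2 * μ * s) s := by
    have := (hasDerivAt_pow 2 s).const_mul μ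
    refine this.congr_deriv (Eq.symm ?_)
    simp; ring
  exact (h1.ofReal_comp.mul_const Complex.I).cexp

lemma fr_triv (μ p q : ℝ) : ‖∫ s in p..q, fr μ s‖ ≤ |q - p| := by
  have := intervalIntegral.norm_integral_le_of_norm_le_const
    (C := 1) (f := fr μ) (a := p) (b := q) (fun x _ => le_of_eq (fr_norm μ x))
  simpa using this

lemma fresnel_half {μ : ℝ} (hμ : 0 < μ) {β : ℝ} (hβ : 0 ≤ β) :
    ‖∫ s in (0:ℝ)..β, fr μ s‖ ≤ 5 / 2 * (Real.sqrt μ)⁻¹ := by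
  set δ : ℝ := (Real.sqrt μ)⁻¹ with hδdef
  have hsq : Real.sqrt μ > 0 := Real.sqrt_pos.mpr hμ
  have hδ : 0 < δ := inv_pos.mpr hsq
  have hμδ : μ * δ = Real.sqrt μ := by
    rw [hδdef, mul_inv_eq_iff_eq_mul₀ hsq.ne']
    exact (Real.mul_self_sqrt hμ.le).symm
  rcases le_or_gt β δ with hle | hlt
  · calc ‖∫ s in (0:ℝ)..β, fr μ s‖ ≤ |β - 0| := fr_triv μ 0 β
      _ = β := by rw [sub_zero, abs_of_nonneg hβ]
      _ ≤ δ := hle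
      _ ≤ 5 / 2 * δ := by linarith
  · -- split at δ
    have hsplit : (∫ s in (0:ℝ)..δ, fr μ s) + ∫ s in δ..β, fr μ s
        = ∫ s in (0:ℝ)..β, fr μ s :=
      intervalIntegral.integral_add_adjacent_intervals (fr_intable μ 0 δ) (fr_intable μ δ β)
    set F : ℝ → ℂ := fun s => fr μ s / (((2 * μ * s : ℝ) : ℂ) * Complex.I) with hF
    set f₂ : ℝ → ℂ := fun s => fr μ s * Complex.I * (((2 * μ * s ^ 2 : ℝ) : ℂ))⁻¹ with hf₂
    have hne : ∀ s : ℝ, s ≠ 0 → (((2 * μ * s : ℝ) : ℂ) * Complex.I) ≠ 0 := by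
      intro s hs
      exact mul_ne_zero (Complex.ofReal_ne_zero.mpr
        (mul_ne_zero (mul_ne_zero two_ne_zero hμ.ne') hs)) Complex.I_ne_zero
    have hderiv : ∀ s : ℝ, s ≠ 0 → HasDerivAt F (fr μ s + f₂ s) s := by
      intro s hs
      have hz : HasDerivAt (fun s : ℝ => (((2 * μ * s : ℝ) : ℂ) * Complex.I))
          (((2 * μ : ℝ) : ℂ) * Complex.I) s := by
        have h1 : HasDerivAt (fun s : ℝ => 2 * μ * s) (2 * μ) s := by
          simpa using (hasDerivAt_id s).const_mul (2 * μ)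
        exact h1.ofReal_comp.mul_const Complex.I
      have := HasDerivAt.div (fr_hasDerivAt μ s) hz (hne s hs)
      refine this.congr_deriv (Eq.symm ?_)
      have h2 : ((2 * μ * s : ℝ) : ℂ) ≠ 0 := Complex.ofReal_ne_zero.mpr
        (mul_ne_zero (mul_ne_zero two_ne_zero hμ.ne') hs)
      have h3 : ((2 * μ * s ^ 2 : ℝ) : ℂ) ≠ 0 := Complex.ofReal_ne_zero.mpr
        (mul_ne_zero (mul_ne_zero two_ne_zero hμ.ne') (pow_ne_zero 2 hs))
      have hsC : (s : ℂ) ≠ 0 := Complex.ofReal_ne_zero.mpr hs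
      have hμC : (μ : ℂ) ≠ 0 := Complex.ofReal_ne_zero.mpr hμ.ne'
      rw [hf₂]
      field_simp
      push_cast
      ring_nf
      have hI3 : (Complex.I) ^ 3 = -Complex.I := by
        rw [pow_succ, Complex.I_sq]; ring
      rw [Complex.I_sq]; ring
    -- integrability and FTC on [δ, β]
    have hδβ : δ ≤ β := hlt.le
    have hsne : ∀ s ∈ Set.uIcc δ β, s ≠ 0 := by
      intro s hsin
      rw [Set.uIcc_of_le hδβ] at hsin
      exact (lt_of_lt_of_le hδ hsin.1).ne'
    have hcont₂ : ContinuousOn f₂ (Set.uIcc δ β) := by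
      refine ContinuousOn.mul (((fr_cont μ).continuousOn).mul continuousOn_const) ?_
      refine ContinuousOn.inv₀ (by fun_prop) ?_
      intro s hsin
      exact Complex.ofReal_ne_zero.mpr
        (mul_ne_zero (mul_ne_zero two_ne_zero hμ.ne') (pow_ne_zero 2 (hsne s hsin)))
    have hint₂ : IntervalIntegrable f₂ volume δ β := hcont₂.intervalIntegrable
    have hFTC : ∫ s in δ..β, (fr μ s + f₂ s) = F β - F δ :=
      intervalIntegral.integral_eq_sub_of_hasDerivAt
        (fun s hsin => hderiv s (hsne s hsin)) ((fr_intable μ δ β).add hint₂)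
    have hadd : ∫ s in δ..β, (fr μ s + f₂ s) = (∫ s in δ..β, fr μ s) + ∫ s in δ..β, f₂ s :=
      intervalIntegral.integral_add (fr_intable μ δ β) hint₂
    have hinvδ : δ⁻¹ = Real.sqrt μ := by rw [hδdef, inv_inv]
    have hkey : (2 * μ * δ)⁻¹ = δ / 2 := by
      rw [show 2 * μ * δ = 2 * (μ * δ) by ring, hμδ, ← hinvδ]
      field_simp
    -- bound on F
    have hFle : ∀ s : ℝ, δ ≤ s → ‖F s‖ ≤ δ / 2 := by
      intro s hsle
      have hspos : 0 < s := lt_of_lt_of_le hδ hsle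
      have hval : ‖F s‖ = (2 * μ * s)⁻¹ := by
        rw [hF]
        rw [norm_div, fr_norm, norm_mul, Complex.norm_I, Complex.norm_real,
          Real.norm_eq_abs, abs_of_pos (by positivity), mul_one, one_div]
      rw [hval, ← hkey]
      gcongr
    -- bound on ∫ f₂
    have hf₂int : ‖∫ s in δ..β, f₂ s‖ ≤ δ / 2 := by
      have hbnd : ∀ t ∈ Set.uIoc δ β, ‖f₂ t‖ ≤ (2 * μ)⁻¹ * (t ^ 2)⁻¹ := by
        intro t htin
        rw [Set.uIoc_of_le hδβ] at htin
        have htpos : 0 < t := lt_trans hδ htin.1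
        rw [hf₂]
        have : ‖fr μ t * Complex.I * (((2 * μ * t ^ 2 : ℝ) : ℂ))⁻¹‖
            = (2 * μ * t ^ 2)⁻¹ := by
          rw [norm_mul, norm_mul, fr_norm, Complex.norm_I, norm_inv, Complex.norm_real,
            Real.norm_eq_abs, abs_of_pos (by positivity)]
          ring
        rw [this, mul_inv]
      have hgint : IntervalIntegrable (fun t : ℝ => (2 * μ)⁻¹ * (t ^ 2)⁻¹) volume δ β := by
        apply ContinuousOn.intervalIntegrable
        refine continuousOn_const.mul (ContinuousOn.inv₀ (by fun_prop) ?_)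
        exact fun s hsin => pow_ne_zero 2 (hsne s hsin)
      have hval : ∫ t in δ..β, (2 * μ)⁻¹ * (t ^ 2)⁻¹
          = (2 * μ)⁻¹ * (δ⁻¹ - β⁻¹) := by
        rw [intervalIntegral.integral_const_mul]
        congr 1
        have : ∀ t ∈ Set.uIcc δ β, HasDerivAt (fun y : ℝ => -(y⁻¹)) ((t ^ 2)⁻¹) t := by
          intro t htin
          simpa using (hasDerivAt_inv (hsne t htin)).fun_neg
        have hii : IntervalIntegrable (fun t : ℝ => (t ^ 2)⁻¹) volume δ β := by
          apply ContinuousOn.intervalIntegrable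
          refine ContinuousOn.inv₀ (by fun_prop) ?_
          exact fun s hsin => pow_ne_zero 2 (hsne s hsin)
        rw [intervalIntegral.integral_eq_sub_of_hasDerivAt this hii]
        ring
      calc ‖∫ s in δ..β, f₂ s‖ ≤ |∫ t in δ..β, (2 * μ)⁻¹ * (t ^ 2)⁻¹| :=
            le_trans (intervalIntegral.norm_integral_le_of_norm_le hδβ
              (Filter.Eventually.of_forall fun t ht => hbnd t (by rwa [Set.uIoc_of_le hδβ]))
              hgint) (le_abs_self _)
        _ = (2 * μ)⁻¹ * (δ⁻¹ - β⁻¹) := by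
            have hββ : β⁻¹ ≤ δ⁻¹ := by gcongr
            rw [hval, abs_of_nonneg (mul_nonneg (by positivity) (by linarith))]
        _ ≤ (2 * μ)⁻¹ * δ⁻¹ := by
            have hβpos : 0 < β := lt_trans hδ hlt
            have : 0 ≤ β⁻¹ := by positivity
            have h2μ : 0 < (2 * μ)⁻¹ := by positivity
            nlinarith
        _ = δ / 2 := by rw [← hkey]; ring
    -- combine
    have hmid : ‖∫ s in δ..β, fr μ s‖ ≤ 3 / 2 * δ := by
      have : (∫ s in δ..β, fr μ s) = F β - F δ - ∫ s in δ..β, f₂ s := by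
        rw [← hFTC, hadd]; ring
      rw [this]
      have h1 := hFle β hδβ
      have h2 := hFle δ le_rfl
      calc ‖F β - F δ - ∫ s in δ..β, f₂ s‖
          ≤ ‖F β - F δ‖ + ‖∫ s in δ..β, f₂ s‖ := norm_sub_le _ _
        _ ≤ ‖F β‖ + ‖F δ‖ + ‖∫ s in δ..β, f₂ s‖ := by
            have := norm_sub_le (F β) (F δ); linarith
        _ ≤ 3 / 2 * δ := by linarith
    have hfirst : ‖∫ s in (0:ℝ)..δ, fr μ s‖ ≤ δ := by
      have := fr_triv μ 0 δ
      rwa [sub_zero, abs_of_pos hδ] at this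
    calc ‖∫ s in (0:ℝ)..β, fr μ s‖
        = ‖(∫ s in (0:ℝ)..δ, fr μ s) + ∫ s in δ..β, fr μ s‖ := by rw [hsplit]
      _ ≤ ‖∫ s in (0:ℝ)..δ, fr μ s‖ + ‖∫ s in δ..β, fr μ s‖ := norm_add_le _ _
      _ ≤ 5 / 2 * δ := by linarith

lemma fresnel_J {μ : ℝ} (hμ : 0 < μ) (β : ℝ) :
    ‖∫ s in (0:ℝ)..β, fr μ s‖ ≤ 5 / 2 * (Real.sqrt μ)⁻¹ := by
  rcases le_or_gt 0 β with h | h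
  · exact fresnel_half hμ h
  · have heven : ∀ x : ℝ, fr μ (-x) = fr μ x := by
      intro x; unfold fr; norm_num
    have h1 := intervalIntegral.integral_comp_neg (f := fr μ) (a := (0:ℝ)) (b := -β)
    simp only [heven, neg_neg, neg_zero] at h1
    -- h1 : ∫ x in 0..(-β), fr μ x = ∫ x in β..0, fr μ x
    have h2 : (∫ s in (0:ℝ)..β, fr μ s) = -∫ s in (0:ℝ)..(-β), fr μ s := by
      rw [h1, intervalIntegral.integral_symm]
    rw [h2, norm_neg]
    exact fresnel_half hμ (by linarith)

lemma fresnel_pos_interval {μ : ℝ} (hμ : 0 < μ) (a b : ℝ) :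
    ‖∫ s in a..b, fr μ s‖ ≤ 5 * (Real.sqrt μ)⁻¹ := by
  have hsplit : (∫ s in (0:ℝ)..a, fr μ s) + ∫ s in a..b, fr μ s
      = ∫ s in (0:ℝ)..b, fr μ s :=
    intervalIntegral.integral_add_adjacent_intervals (fr_intable μ 0 a) (fr_intable μ a b)
  have h1 := fresnel_J hμ a
  have h2 := fresnel_J hμ b
  have : (∫ s in a..b, fr μ s) = (∫ s in (0:ℝ)..b, fr μ s) - ∫ s in (0:ℝ)..a, fr μ s := by
    rw [← hsplit]; ring
  rw [this]
  calc ‖(∫ s in (0:ℝ)..b, fr μ s) - ∫ s in (0:ℝ)..a, fr μ s‖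
      ≤ ‖∫ s in (0:ℝ)..b, fr μ s‖ + ‖∫ s in (0:ℝ)..a, fr μ s‖ := norm_sub_le _ _
    _ ≤ 5 * (Real.sqrt μ)⁻¹ := by linarith

lemma fresnel_signed {μ : ℝ} (hμ : μ ≠ 0) (a b : ℝ) :
    ‖∫ s in a..b, fr μ s‖ ≤ 5 * (Real.sqrt |μ|)⁻¹ := by
  rcases lt_or_gt_of_ne hμ with hneg | hpos
  · have hconj : ∀ s : ℝ, fr μ s = (starRingEnd ℂ) (fr (-μ) s) := by
      intro s
      unfold fr
      rw [← Complex.exp_conj]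
      congr 1
      simp [Complex.conj_I]
    have h2 : (∫ s in a..b, fr μ s)
        = (starRingEnd ℂ) (∫ s in a..b, fr (-μ) s) := by
      rw [intervalIntegral.integral_congr (fun s _ => hconj s)]
      unfold intervalIntegral
      rw [integral_conj, integral_conj, ← map_sub]
    rw [h2, RCLike.norm_conj, abs_of_neg hneg]
    exact fresnel_pos_interval (by linarith) a b
  · rw [abs_of_pos hpos]
    exact fresnel_pos_interval hpos a b

noncomputable def qr (A B t : ℝ) : ℂ :=
  Complex.exp (((A * t ^ 2 + B * t : ℝ) : ℂ) * Complex.I)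

lemma qr_cont (A B : ℝ) : Continuous (qr A B) := by unfold qr; fun_prop

lemma qr_norm (A B t : ℝ) : ‖qr A B t‖ = 1 := Complex.norm_exp_ofReal_mul_I _

lemma qr_intable (A B a b : ℝ) : IntervalIntegrable (qr A B) volume a b :=
  (qr_cont A B).intervalIntegrable a b

lemma qr_hasDerivAt (A B t : ℝ) :
    HasDerivAt (qr A B) (qr A B t * (((2 * A * t + B : ℝ) : ℂ) * Complex.I)) t := by
  have h1 : HasDerivAt (fun x : ℝ => A * x ^ 2 + B * x) (2 * A * t + B) t := by
    have h2 := ((hasDerivAt_pow 2 t).const_mul A).add ((hasDerivAt_id t).const_mul B)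
    refine h2.congr_deriv (Eq.symm ?_)
    simp; ring
  exact (h1.ofReal_comp.mul_const Complex.I).cexp

lemma qr_triv (A B p q : ℝ) : ‖∫ t in p..q, qr A B t‖ ≤ |q - p| := by
  have := intervalIntegral.norm_integral_le_of_norm_le_const
    (C := 1) (f := qr A B) (a := p) (b := q) (fun x _ => le_of_eq (qr_norm A B x))
  simpa using this

lemma sqrt_nine : Real.sqrt 9 = 3 := by
  rw [show (9:ℝ) = 3 ^ 2 by norm_num, Real.sqrt_sq (by norm_num : (0:ℝ) ≤ 3)]

lemma sqrt_four : Real.sqrt 4 = 2 := by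
  rw [show (4:ℝ) = 2 ^ 2 by norm_num, Real.sqrt_sq (by norm_num : (0:ℝ) ≤ 2)]

lemma quad_core {A B : ℝ} (hAB : ¬(A = 0 ∧ B = 0)) {r : ℝ} (hr : r ∈ Set.Icc (-2:ℝ) 2) :
    ‖∫ t in (-2:ℝ)..r, qr A B t‖ ≤ 15 * (Real.sqrt (|A| + |B|))⁻¹ := by
  have hD : 0 < |A| + |B| := by
    rcases not_and_or.mp hAB with h | h
    · have := abs_pos.mpr h
      have := abs_nonneg B
      linarith
    · have := abs_pos.mpr h
      have := abs_nonneg A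
      linarith
  have hsD : 0 < Real.sqrt (|A| + |B|) := Real.sqrt_pos.mpr hD
  rcases le_or_gt (|B|) (8 * |A|) with hcase | hcase
  · -- |B| ≤ 8|A| : complete the square, A ≠ 0
    have hA : A ≠ 0 := by
      intro h
      apply hAB
      refine ⟨h, ?_⟩
      rw [h] at hcase
      simp only [abs_zero, mul_zero] at hcase
      exact abs_nonpos_iff.mp hcase
    set c : ℝ := B / (2 * A) with hc
    have hptw : ∀ t : ℝ, qr A B t
        = Complex.exp (((-(A * c ^ 2) : ℝ) : ℂ) * Complex.I) * fr A (t + c) := by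
      intro t
      unfold qr fr
      rw [← Complex.exp_add, ← add_mul]
      congr 1
      rw [hc]
      push_cast
      have hA' : (A : ℂ) ≠ 0 := Complex.ofReal_ne_zero.mpr hA
      field_simp
      ring
    have heq : (∫ t in (-2:ℝ)..r, qr A B t)
        = Complex.exp (((-(A * c ^ 2) : ℝ) : ℂ) * Complex.I)
          * ∫ s in (-2+c)..(r+c), fr A s := by
      rw [← intervalIntegral.integral_comp_add_right (f := fr A) c,
        ← intervalIntegral.integral_const_mul]
      exact intervalIntegral.integral_congr (fun t _ => hptw t)
    rw [heq, norm_mul, Complex.norm_exp_ofReal_mul_I, one_mul]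
    have h1 : ‖∫ s in (-2+c)..(r+c), fr A s‖ ≤ 5 * (Real.sqrt |A|)⁻¹ :=
      fresnel_signed hA _ _
    have hsA : 0 < Real.sqrt |A| := Real.sqrt_pos.mpr (abs_pos.mpr hA)
    have h2 : Real.sqrt (|A| + |B|) ≤ 3 * Real.sqrt |A| := by
      have h9 : |A| + |B| ≤ 9 * |A| := by linarith
      calc Real.sqrt (|A| + |B|) ≤ Real.sqrt (9 * |A|) := Real.sqrt_le_sqrt h9
        _ = 3 * Real.sqrt |A| := by
            rw [Real.sqrt_mul (by norm_num : (0:ℝ) ≤ 9), sqrt_nine]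
    have h3 : (Real.sqrt |A|)⁻¹ ≤ 3 * (Real.sqrt (|A| + |B|))⁻¹ := by
      have hpos : 0 < Real.sqrt (|A| + |B|) / 3 := by positivity
      have hle : Real.sqrt (|A| + |B|) / 3 ≤ Real.sqrt |A| := by linarith
      calc (Real.sqrt |A|)⁻¹ ≤ (Real.sqrt (|A| + |B|) / 3)⁻¹ := by gcongr
        _ = 3 * (Real.sqrt (|A| + |B|))⁻¹ := by
            field_simp
    calc ‖∫ s in (-2+c)..(r+c), fr A s‖ ≤ 5 * (Real.sqrt |A|)⁻¹ := h1
      _ ≤ 15 * (Real.sqrt (|A| + |B|))⁻¹ := by linarith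
  · -- 8|A| < |B| : nonstationary phase
    have hBpos : 0 < |B| := by
      have := abs_nonneg A
      linarith
    have hB : B ≠ 0 := abs_pos.mp hBpos
    have hsub : Set.uIcc (-2:ℝ) r ⊆ Set.Icc (-2:ℝ) 2 := by
      rw [Set.uIcc_of_le hr.1]
      exact Set.Icc_subset_Icc le_rfl hr.2
    have hphi : ∀ t ∈ Set.uIcc (-2:ℝ) r, |B| / 2 ≤ |2 * A * t + B| := by
      intro t ht
      have ht' := hsub ht
      have htabs : |t| ≤ 2 := abs_le.mpr ⟨ht'.1, ht'.2⟩
      have h1 : |2 * A * t| ≤ 4 * |A| := by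
        rw [abs_mul, abs_mul, abs_two]
        have := abs_nonneg A
        nlinarith
      have h2 : |B| ≤ |2 * A * t + B| + |2 * A * t| := by
        have h3 := abs_add_le (2 * A * t + B) (-(2 * A * t))
        rw [abs_neg] at h3
        have e : 2 * A * t + B + -(2 * A * t) = B := by ring
        rw [e] at h3
        exact h3
      linarith
    have hphine : ∀ t ∈ Set.uIcc (-2:ℝ) r, 2 * A * t + B ≠ 0 := by
      intro t ht h0
      have := hphi t ht
      rw [h0, abs_zero] at this
      linarith
    have hzne : ∀ t ∈ Set.uIcc (-2:ℝ) r,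
        (((2 * A * t + B : ℝ) : ℂ) * Complex.I) ≠ 0 := fun t ht =>
      mul_ne_zero (Complex.ofReal_ne_zero.mpr (hphine t ht)) Complex.I_ne_zero
    set G : ℝ → ℂ := fun t => qr A B t / (((2 * A * t + B : ℝ) : ℂ) * Complex.I) with hG
    set f₂ : ℝ → ℂ := fun t =>
      qr A B t * ((2 * A : ℝ) : ℂ) * Complex.I / (((2 * A * t + B : ℝ) : ℂ) ^ 2) with hf₂
    have hderiv : ∀ t ∈ Set.uIcc (-2:ℝ) r, HasDerivAt G (qr A B t + f₂ t) t := by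
      intro t ht
      have hz : HasDerivAt (fun t : ℝ => (((2 * A * t + B : ℝ) : ℂ) * Complex.I))
          (((2 * A : ℝ) : ℂ) * Complex.I) t := by
        have h1 : HasDerivAt (fun t : ℝ => 2 * A * t + B) (2 * A) t := by
          simpa using ((hasDerivAt_id t).const_mul (2 * A)).add_const B
        exact h1.ofReal_comp.mul_const Complex.I
      have := HasDerivAt.div (qr_hasDerivAt A B t) hz (hzne t ht)
      refine this.congr_deriv (Eq.symm ?_)
      have h2 : ((2 * A * t + B : ℝ) : ℂ) ≠ 0 := Complex.ofReal_ne_zero.mpr (hphine t ht)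
      have hI3 : (Complex.I) ^ 3 = -Complex.I := by rw [pow_succ, Complex.I_sq]; ring
      have hz2 : (((2 * A * t + B : ℝ) : ℂ) * Complex.I) ^ 2 ≠ 0 := pow_ne_zero 2 (hzne t ht)
      rw [hf₂, eq_div_iff hz2]
      field_simp [h2]
      ring_nf
      simp only [Complex.I_sq, hI3]
      have hXne : ((A:ℂ) * (t:ℂ) * (B:ℂ) * 4 + (A:ℂ) ^ 2 * (t:ℂ) ^ 2 * 4 + (B:ℂ) ^ 2) ≠ 0 := by
        have he : ((A:ℂ) * (t:ℂ) * (B:ℂ) * 4 + (A:ℂ) ^ 2 * (t:ℂ) ^ 2 * 4 + (B:ℂ) ^ 2)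
            = ((2 * A * t + B : ℝ) : ℂ) ^ 2 := by push_cast; ring
        rw [he]
        exact pow_ne_zero 2 h2
      have hXX := mul_inv_cancel₀ hXne
      linear_combination (0:ℂ) * hXX
    have hcont₂ : ContinuousOn f₂ (Set.uIcc (-2:ℝ) r) := by
      refine ContinuousOn.div
        ((((qr_cont A B).mul continuous_const).mul continuous_const).continuousOn)
        (by fun_prop) ?_
      intro t ht
      exact pow_ne_zero 2 (Complex.ofReal_ne_zero.mpr (hphine t ht))
    have hint₂ : IntervalIntegrable f₂ volume (-2) r := hcont₂.intervalIntegrable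
    have hFTC : ∫ t in (-2:ℝ)..r, (qr A B t + f₂ t) = G r - G (-2) :=
      intervalIntegral.integral_eq_sub_of_hasDerivAt hderiv
        ((qr_intable A B (-2) r).add hint₂)
    have hadd : ∫ t in (-2:ℝ)..r, (qr A B t + f₂ t)
        = (∫ t in (-2:ℝ)..r, qr A B t) + ∫ t in (-2:ℝ)..r, f₂ t :=
      intervalIntegral.integral_add (qr_intable A B (-2) r) hint₂
    -- bound on G at endpoints
    have hGle : ∀ t ∈ Set.uIcc (-2:ℝ) r, ‖G t‖ ≤ 2 / |B| := by
      intro t ht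
      have hval : ‖G t‖ = |2 * A * t + B|⁻¹ := by
        rw [hG]
        rw [norm_div, qr_norm, norm_mul, Complex.norm_I, Complex.norm_real,
          Real.norm_eq_abs, mul_one, one_div]
      rw [hval]
      have h1 := hphi t ht
      have h2 : 0 < |B| / 2 := by linarith
      calc |2 * A * t + B|⁻¹ ≤ (|B| / 2)⁻¹ := by gcongr
        _ = 2 / |B| := by field_simp
    -- bound on f₂
    have hf₂le : ∀ t ∈ Set.uIcc (-2:ℝ) r, ‖f₂ t‖ ≤ 1 / |B| := by
      intro t ht
      have h1 := hphi t ht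
      have hval : ‖f₂ t‖ = 2 * |A| / (2 * A * t + B) ^ 2 := by
        rw [hf₂]
        simp only [norm_div, norm_mul, qr_norm, Complex.norm_I, one_mul, mul_one]
        congr 1
        · rw [Complex.norm_real, Real.norm_eq_abs, abs_mul, abs_two]
        · rw [← Complex.ofReal_pow, Complex.norm_real, Real.norm_eq_abs,
            abs_of_nonneg (sq_nonneg _)]
      rw [hval]
      have hden : 0 < (2 * A * t + B) ^ 2 :=
        lt_of_le_of_ne (sq_nonneg _) (Ne.symm (pow_ne_zero 2 (hphine t ht)))
      rw [div_le_div_iff₀ hden hBpos]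
      have hsq : (|B| / 2) ^ 2 ≤ (2 * A * t + B) ^ 2 := by
        rw [← sq_abs (2 * A * t + B)]
        have h2 : 0 ≤ |B| / 2 := by positivity
        nlinarith [abs_nonneg (2 * A * t + B)]
      nlinarith [abs_nonneg A, hcase]
    have hf₂int : ‖∫ t in (-2:ℝ)..r, f₂ t‖ ≤ 4 / |B| := by
      have hthis := intervalIntegral.norm_integral_le_of_norm_le_const
        (C := 1 / |B|) (f := f₂) (a := (-2:ℝ)) (b := r)
        (fun t ht => hf₂le t (Set.uIoc_subset_uIcc ht))
      calc ‖∫ t in (-2:ℝ)..r, f₂ t‖ ≤ 1 / |B| * |r - (-2)| := hthis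
        _ ≤ 1 / |B| * 4 := by
            have h4 : |r - (-2)| ≤ 4 := by
              rw [abs_of_nonneg (by linarith [hr.1])]
              linarith [hr.2]
            have : 0 ≤ 1 / |B| := by positivity
            nlinarith
        _ = 4 / |B| := by ring
    have hmain : ‖∫ t in (-2:ℝ)..r, qr A B t‖ ≤ 8 / |B| := by
      have heq2 : (∫ t in (-2:ℝ)..r, qr A B t)
          = G r - G (-2) - ∫ t in (-2:ℝ)..r, f₂ t := by
        rw [← hFTC, hadd]; ring
      rw [heq2]
      have h1 := hGle r (Set.right_mem_uIcc)
      have h2 := hGle (-2) (Set.left_mem_uIcc)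
      calc ‖G r - G (-2) - ∫ t in (-2:ℝ)..r, f₂ t‖
          ≤ ‖G r - G (-2)‖ + ‖∫ t in (-2:ℝ)..r, f₂ t‖ := norm_sub_le _ _
        _ ≤ ‖G r‖ + ‖G (-2)‖ + ‖∫ t in (-2:ℝ)..r, f₂ t‖ := by
            have := norm_sub_le (G r) (G (-2)); linarith
        _ ≤ 8 / |B| := by
            have : 2 / |B| + 2 / |B| + 4 / |B| = 8 / |B| := by ring
            linarith
    -- compare with RHS
    rcases le_or_gt (|A| + |B|) 4 with hD4 | hD4
    · -- trivial bound
      have h1 : ‖∫ t in (-2:ℝ)..r, qr A B t‖ ≤ 4 := by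
        have ht := qr_triv A B (-2) r
        have h4 : |r - (-2)| ≤ 4 := by
          rw [abs_of_nonneg (by linarith [hr.1])]
          linarith [hr.2]
        linarith
      have hs2 : Real.sqrt (|A| + |B|) ≤ 2 := by
        rw [← sqrt_four]
        exact Real.sqrt_le_sqrt hD4
      have hmul : Real.sqrt (|A| + |B|) * (Real.sqrt (|A| + |B|))⁻¹ = 1 :=
        mul_inv_cancel₀ hsD.ne'
      have hinvpos : 0 < (Real.sqrt (|A| + |B|))⁻¹ := by positivity
      nlinarith
    · -- use 8/|B|
      have hB2 : (|A| + |B|) / 2 ≤ |B| := by linarith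
      have hs2 : 2 ≤ Real.sqrt (|A| + |B|) := by
        rw [← sqrt_four]
        exact Real.sqrt_le_sqrt hD4.le
      have hss : Real.sqrt (|A| + |B|) * Real.sqrt (|A| + |B|) = |A| + |B| :=
        Real.mul_self_sqrt hD.le
      calc ‖∫ t in (-2:ℝ)..r, qr A B t‖ ≤ 8 / |B| := hmain
        _ ≤ 8 / ((|A| + |B|) / 2) := by gcongr
        _ = 16 / (|A| + |B|) := by rw [div_div_eq_mul_div]; norm_num
        _ ≤ 8 / Real.sqrt (|A| + |B|) := by
            rw [div_le_div_iff₀ hD (by positivity)]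
            nlinarith
        _ = 8 * (Real.sqrt (|A| + |B|))⁻¹ := by ring
        _ ≤ 15 * (Real.sqrt (|A| + |B|))⁻¹ := by
            have : 0 ≤ (Real.sqrt (|A| + |B|))⁻¹ := by positivity
            linarith

lemma osc_bound {A B : ℝ} (hAB : ¬(A = 0 ∧ B = 0)) {g g' : ℝ → ℂ} {M : ℝ}
    (hg : ∀ t, HasDerivAt g (g' t) t) (hg' : Continuous g')
    (hgM : ∀ t, ‖g' t‖ ≤ M)
    (hgsupp : ∀ t : ℝ, 1 < |t| → g t = 0) :
    ‖∫ t : ℝ, qr A B t * g t‖ ≤ 60 * M * (Real.sqrt (|A| + |B|))⁻¹ := by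
  have hgc : Continuous g := continuous_iff_continuousAt.mpr fun t => (hg t).continuousAt
  have hsub : Function.support (fun t => qr A B t * g t) ⊆ Set.Ioc (-2:ℝ) 2 := by
    intro t ht
    by_contra hmem
    apply ht
    have h1 : 1 < |t| := by
      simp only [Set.mem_Ioc, not_and_or, not_lt, not_le] at hmem
      rcases hmem with h | h
      · rw [abs_of_nonpos (by linarith)]; linarith
      · rw [abs_of_pos (by linarith)]; linarith
    simp [hgsupp t h1]
  have hint : (∫ t : ℝ, qr A B t * g t) = ∫ t in (-2:ℝ)..2, qr A B t * g t :=
    (intervalIntegral.integral_eq_integral_of_support_subset hsub).symm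
  set F : ℝ → ℂ := fun r => ∫ t in (-2:ℝ)..r, qr A B t with hF
  have hFd : ∀ r : ℝ, HasDerivAt F (qr A B r) r := fun r =>
    intervalIntegral.integral_hasDerivAt_right (qr_intable A B (-2) r)
      ((qr_cont A B).stronglyMeasurableAtFilter _ _) (qr_cont A B).continuousAt
  have hFc : Continuous F := continuous_iff_continuousAt.mpr fun r => (hFd r).continuousAt
  have hprod : ∀ r : ℝ, HasDerivAt (fun r => F r * g r) (qr A B r * g r + F r * g' r) r :=
    fun r => (hFd r).mul (hg r)
  have hi1 : IntervalIntegrable (fun t => qr A B t * g t) volume (-2) 2 :=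
    ((qr_cont A B).mul hgc).intervalIntegrable _ _
  have hi2 : IntervalIntegrable (fun t => F t * g' t) volume (-2) 2 :=
    (hFc.mul hg').intervalIntegrable _ _
  have hFTC : ∫ r in (-2:ℝ)..2, (qr A B r * g r + F r * g' r)
      = F 2 * g 2 - F (-2) * g (-2) :=
    intervalIntegral.integral_eq_sub_of_hasDerivAt (fun r _ => hprod r) (hi1.add hi2)
  have hg2 : g 2 = 0 := hgsupp 2 (by rw [abs_of_pos] <;> norm_num)
  have hgm2 : g (-2) = 0 := hgsupp (-2) (by rw [abs_of_neg] <;> norm_num)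
  have hsplit : (∫ r in (-2:ℝ)..2, qr A B r * g r) = - ∫ r in (-2:ℝ)..2, F r * g' r := by
    have h0 : (∫ r in (-2:ℝ)..2, qr A B r * g r) + ∫ r in (-2:ℝ)..2, F r * g' r = 0 := by
      rw [← intervalIntegral.integral_add hi1 hi2, hFTC, hg2, hgm2]
      simp
    linear_combination h0
  have hM0 : 0 ≤ M := le_trans (norm_nonneg _) (hgM 0)
  have hFbound : ∀ r ∈ Set.uIoc (-2:ℝ) 2,
      ‖F r * g' r‖ ≤ 15 * (Real.sqrt (|A| + |B|))⁻¹ * M := by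
    intro r hrin
    rw [Set.uIoc_of_le (by norm_num : (-2:ℝ) ≤ 2)] at hrin
    have hr : r ∈ Set.Icc (-2:ℝ) 2 := ⟨hrin.1.le, hrin.2⟩
    rw [norm_mul]
    exact mul_le_mul (quad_core hAB hr) (hgM r) (norm_nonneg _) (by positivity)
  rw [hint, hsplit, norm_neg]
  calc ‖∫ r in (-2:ℝ)..2, F r * g' r‖
      ≤ 15 * (Real.sqrt (|A| + |B|))⁻¹ * M * |2 - (-2)| :=
        intervalIntegral.norm_integral_le_of_norm_le_const hFbound
    _ = 60 * M * (Real.sqrt (|A| + |B|))⁻¹ := by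
        rw [show |(2:ℝ) - (-2)| = 4 by norm_num]; ring

lemma inv_sqrt_eq_rpow {w : ℝ} (hw : 0 ≤ w) : (Real.sqrt w)⁻¹ = w ^ (-(1:ℝ)/2) := by
  rw [Real.sqrt_eq_rpow, ← Real.rpow_neg hw]
  norm_num

/-- Kernel estimate for `𝒪_λ 𝒪_λ^*`: if `ψ` is `C¹` and supported in the unit ball, the
kernel `K(u,v,x,y) = ∫ e^{iλ[(u-x)t² + (v²-y²)t]} conj(ψ(x,y,t)) ψ(u,v,t) dt` satisfies
`|K| ≤ C λ^{-1/2} (|u-x| + |v²-y²|)^{-1/2}` with `C` depending only on `ψ`. -/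
theorem stmt5 (ψ : ℝ → ℝ → ℝ → ℂ)
    (hψ : ContDiff ℝ 1 (fun p : ℝ × ℝ × ℝ => ψ p.1 p.2.1 p.2.2))
    (hsupp : ∀ x y t : ℝ, ψ x y t ≠ 0 → x ^ 2 + y ^ 2 + t ^ 2 ≤ 1) :
    ∃ C : ℝ, 0 < C ∧ ∀ L : ℝ, 0 < L → ∀ u v x y : ℝ,
      ¬(u - x = 0 ∧ v ^ 2 - y ^ 2 = 0) →
      ‖∫ t : ℝ, Complex.exp (Complex.I * (L : ℂ) *
            (((u - x) * t ^ 2 + (v ^ 2 - y ^ 2) * t : ℝ) : ℂ)) *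
          (starRingEnd ℂ) (ψ x y t) * ψ u v t‖ ≤
        C * L ^ (-(1 : ℝ) / 2) * (|u - x| + |v ^ 2 - y ^ 2|) ^ (-(1 : ℝ) / 2) := by
  classical
  set Ψ : ℝ × ℝ × ℝ → ℂ := fun p => ψ p.1 p.2.1 p.2.2 with hΨ
  have hΨc : Continuous Ψ := hψ.continuous
  have hΨsupp : HasCompactSupport Ψ := by
    apply HasCompactSupport.intro (K := Metric.closedBall (0 : ℝ × ℝ × ℝ) 1)
      (isCompact_closedBall _ _)
    intro p hp
    by_contra h0
    apply hp
    have hb := hsupp p.1 p.2.1 p.2.2 h0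
    have h1 : |p.1| ≤ 1 := by
      rw [← sq_le_one_iff_abs_le_one]
      nlinarith [sq_nonneg p.2.1, sq_nonneg p.2.2]
    have h2 : |p.2.1| ≤ 1 := by
      rw [← sq_le_one_iff_abs_le_one]
      nlinarith [sq_nonneg p.1, sq_nonneg p.2.2]
    have h3 : |p.2.2| ≤ 1 := by
      rw [← sq_le_one_iff_abs_le_one]
      nlinarith [sq_nonneg p.1, sq_nonneg p.2.1]
    rw [Metric.mem_closedBall, dist_zero_right, Prod.norm_def, Prod.norm_def]
    simp only [Real.norm_eq_abs]
    exact max_le h1 (max_le h2 h3)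
  obtain ⟨M₀', hM₀'⟩ := hΨsupp.exists_bound_of_continuous hΨc
  set M₀ : ℝ := max M₀' 1 with hM₀def
  have hM₀pos : 0 < M₀ := lt_of_lt_of_le one_pos (le_max_right _ _)
  have hM₀ : ∀ p, ‖Ψ p‖ ≤ M₀ := fun p => le_trans (hM₀' p) (le_max_left _ _)
  have hfd : Continuous (fderiv ℝ Ψ) := hψ.continuous_fderiv one_ne_zero
  obtain ⟨M₁', hM₁'⟩ := (hΨsupp.fderiv (𝕜 := ℝ)).exists_bound_of_continuous hfd
  set M₁ : ℝ := max M₁' 1 with hM₁def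
  have hM₁pos : 0 < M₁ := lt_of_lt_of_le one_pos (le_max_right _ _)
  set D : ℝ → ℝ → ℝ → ℂ := fun x y t =>
    fderiv ℝ Ψ (x, y, t) ((0 : ℝ), (0 : ℝ), (1 : ℝ)) with hD
  have hDle : ∀ x y t, ‖D x y t‖ ≤ M₁ := by
    intro x y t
    have hv : ‖((0 : ℝ), (0 : ℝ), (1 : ℝ))‖ = 1 := by
      rw [Prod.norm_def, Prod.norm_def]
      simp
    calc ‖D x y t‖ ≤ ‖fderiv ℝ Ψ (x, y, t)‖ * ‖((0 : ℝ), (0 : ℝ), (1 : ℝ))‖ :=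
          ContinuousLinearMap.le_opNorm _ _
      _ = ‖fderiv ℝ Ψ (x, y, t)‖ := by rw [hv, mul_one]
      _ ≤ M₁ := le_trans (hM₁' _) (le_max_left _ _)
  have hpsiD : ∀ x y t, HasDerivAt (fun t => ψ x y t) (D x y t) t := by
    intro x y t
    have hcurve : HasDerivAt (fun t : ℝ => ((x, y, t) : ℝ × ℝ × ℝ))
        (((0 : ℝ), (0 : ℝ), (1 : ℝ))) t :=
      (hasDerivAt_const t x).prodMk ((hasDerivAt_const t y).prodMk (hasDerivAt_id t))
    exact ((hψ.differentiable one_ne_zero) (x, y, t)).hasFDerivAt.comp_hasDerivAt t hcurve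
  have hcurvec : ∀ x y : ℝ, Continuous (fun t : ℝ => ((x, y, t) : ℝ × ℝ × ℝ)) :=
    fun x y => continuous_const.prodMk (continuous_const.prodMk continuous_id)
  have hDcont : ∀ x y, Continuous (fun t => D x y t) := by
    intro x y
    exact Continuous.clm_apply (hfd.comp (hcurvec x y)) continuous_const
  have hψcont : ∀ x y, Continuous (fun t => ψ x y t) := by
    intro x y
    exact hΨc.comp (hcurvec x y)
  refine ⟨120 * M₀ * M₁, by positivity, ?_⟩
  intro L hL u v x y hne
  set g : ℝ → ℂ := fun t => (starRingEnd ℂ) (ψ x y t) * ψ u v t with hg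
  set g' : ℝ → ℂ := fun t =>
    (starRingEnd ℂ) (D x y t) * ψ u v t + (starRingEnd ℂ) (ψ x y t) * D u v t with hg'
  have hgd : ∀ t, HasDerivAt g (g' t) t := by
    intro t
    have h1 := ((hpsiD x y t).star).mul (hpsiD u v t)
    simp only [← starRingEnd_apply] at h1
    exact h1
  have hg'c : Continuous g' := by
    apply Continuous.add
    · exact ((continuous_star.comp (hDcont x y)).mul (hψcont u v))
    · exact ((continuous_star.comp (hψcont x y)).mul (hDcont u v))
  have hg'M : ∀ t, ‖g' t‖ ≤ 2 * (M₀ * M₁) := by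
    intro t
    calc ‖g' t‖ ≤ ‖(starRingEnd ℂ) (D x y t) * ψ u v t‖
          + ‖(starRingEnd ℂ) (ψ x y t) * D u v t‖ := norm_add_le _ _
      _ = ‖D x y t‖ * ‖ψ u v t‖ + ‖ψ x y t‖ * ‖D u v t‖ := by
          rw [norm_mul, norm_mul, RCLike.norm_conj, RCLike.norm_conj]
      _ ≤ M₁ * M₀ + M₀ * M₁ := by
          have e1 : ‖ψ u v t‖ ≤ M₀ := hM₀ (u, v, t)
          have e2 : ‖ψ x y t‖ ≤ M₀ := hM₀ (x, y, t)
          have e3 := hDle x y t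
          have e4 := hDle u v t
          have := norm_nonneg (D x y t)
          have := norm_nonneg (ψ u v t)
          have := norm_nonneg (ψ x y t)
          have := norm_nonneg (D u v t)
          nlinarith
      _ = 2 * (M₀ * M₁) := by ring
  have hgsupp : ∀ t : ℝ, 1 < |t| → g t = 0 := by
    intro t ht
    have ht2 : 1 < t ^ 2 := by
      have := sq_abs t
      nlinarith
    have h0 : ψ u v t = 0 := by
      by_contra h0
      have := hsupp u v t h0
      nlinarith [sq_nonneg u, sq_nonneg v]
    rw [hg]
    simp [h0]
  have hEq : (fun t : ℝ => Complex.exp (Complex.I * (L : ℂ) *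
        (((u - x) * t ^ 2 + (v ^ 2 - y ^ 2) * t : ℝ) : ℂ)) *
        (starRingEnd ℂ) (ψ x y t) * ψ u v t)
      = fun t => qr (L * (u - x)) (L * (v ^ 2 - y ^ 2)) t * g t := by
    funext t
    rw [hg, mul_assoc]
    congr 1
    unfold qr
    congr 1
    push_cast
    ring
  rw [hEq]
  have hAB : ¬(L * (u - x) = 0 ∧ L * (v ^ 2 - y ^ 2) = 0) := by
    rintro ⟨h1, h2⟩
    apply hne
    constructor
    · rcases mul_eq_zero.mp h1 with h | h
      · exact absurd h hL.ne'
      · exact h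
    · rcases mul_eq_zero.mp h2 with h | h
      · exact absurd h hL.ne'
      · exact h
  have hosc := osc_bound hAB hgd hg'c hg'M hgsupp
  have habs : |L * (u - x)| + |L * (v ^ 2 - y ^ 2)|
      = L * (|u - x| + |v ^ 2 - y ^ 2|) := by
    rw [abs_mul, abs_mul, abs_of_pos hL]
    ring
  have hDnn : (0:ℝ) ≤ |u - x| + |v ^ 2 - y ^ 2| := by positivity
  calc ‖∫ t : ℝ, qr (L * (u - x)) (L * (v ^ 2 - y ^ 2)) t * g t‖
      ≤ 60 * (2 * (M₀ * M₁)) * (Real.sqrt (|L * (u - x)| + |L * (v ^ 2 - y ^ 2)|))⁻¹ := hosc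
    _ = 120 * M₀ * M₁ * (Real.sqrt (L * (|u - x| + |v ^ 2 - y ^ 2|)))⁻¹ := by
        rw [habs]; ring
    _ = 120 * M₀ * M₁ * L ^ (-(1:ℝ)/2) * (|u - x| + |v ^ 2 - y ^ 2|) ^ (-(1:ℝ)/2) := by
        rw [Real.sqrt_mul hL.le, mul_inv, inv_sqrt_eq_rpow hL.le, inv_sqrt_eq_rpow hDnn]
        ring
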